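/- arXiv:1110.5770 — 6 statements merged into one kernel-verified Lean document; each statement's English description precedes it below -/
import Mathlib

section
/- For every n ≥ 3, the cycle C_n satisfies rvc(C_n) ≤ ⌈n/2⌉. In particular, the coloring of C_n = v_1 v_2 ⋯ v_n that assigns color i to v_i for 1 ≤ i ≤ ⌈n/2⌉ and color i − ⌈n/2⌉ to v_i for ⌈n/2⌉ + 1 ≤ i ≤ n makes C_n rainbow vertex-connected. -/
/-- The list of internal vertices of a walk (its support minus the two ends). -/
def SimpleGraph.Walk.internalVertices {V : Type*} {G : SimpleGraph V} {u v : V}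
    (p : G.Walk u v) : List V :=
  p.support.tail.dropLast

/-- A walk is a *rainbow path* w.r.t. a vertex coloring `c` if it is a path and its
internal vertices receive pairwise distinct colors. -/
def SimpleGraph.Walk.IsRainbowPath {V α : Type*} {G : SimpleGraph V} {u v : V}
    (c : V → α) (p : G.Walk u v) : Prop :=
  p.IsPath ∧ (p.internalVertices.map c).Nodup

/-- A vertex-colored graph is *rainbow vertex-connected* if every pair of distinct
vertices is joined by at least one rainbow path. -/
def SimpleGraph.RainbowVertexConnected {V α : Type*} (G : SimpleGraph V) (c : V → α) : Prop :=
  ∀ u v : V, u ≠ v → ∃ p : G.Walk u v, p.IsRainbowPath c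

/-- `G` can be made rainbow vertex-connected using at most `k` colors: there is a
vertex coloring such that every pair of distinct vertices is joined by a rainbow path
all of whose internal vertices have colors among `0, …, k-1`. -/
def SimpleGraph.RVCWith {V : Type*} (G : SimpleGraph V) (k : ℕ) : Prop :=
  ∃ c : V → ℕ, ∀ u v : V, u ≠ v → ∃ p : G.Walk u v,
    p.IsRainbowPath c ∧ ∀ w ∈ p.internalVertices, c w < k

/-- The *rainbow vertex-connection number* `rvc G`: the minimum number of colors
needed to make `G` rainbow vertex-connected. -/
noncomputable def SimpleGraph.rvc {V : Type*} (G : SimpleGraph V) : ℕ :=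
  sInf {k | G.RVCWith k}

/-- A walk is a *revised rainbow path* w.r.t. a vertex coloring `c` if it is a path and
all of its vertices have distinct colors except that the two end vertices may share a
color. -/
def SimpleGraph.Walk.IsRevisedRainbowPath {V α : Type*} {G : SimpleGraph V} {u v : V}
    (c : V → α) (p : G.Walk u v) : Prop :=
  p.IsPath ∧ (p.support.dropLast.map c).Nodup ∧ (p.support.tail.map c).Nodup

/-- A vertex-colored graph is *revised rainbow vertex-connected* if every pair of
distinct vertices is joined by at least one revised rainbow path. -/
def SimpleGraph.RevisedRainbowVertexConnected {V α : Type*} (G : SimpleGraph V)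
    (c : V → α) : Prop :=
  ∀ u v : V, u ≠ v → ∃ p : G.Walk u v, p.IsRevisedRainbowPath c

/-- The *revised rainbow vertex-connection number* `rvc* G`. -/
noncomputable def SimpleGraph.rvcStar {V : Type*} (G : SimpleGraph V) : ℕ :=
  sInf {k | ∃ c : V → Fin k, G.RevisedRainbowVertexConnected c}

/-- A *cut vertex*: a vertex whose removal disconnects the graph. -/
def SimpleGraph.IsCutVertex {V : Type*} (G : SimpleGraph V) (v : V) : Prop :=
  ¬ (G.induce {u | u ≠ v}).Preconnected

/-- A *block* of `G`: a maximal (induced) connected subgraph without a cut vertex,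
described by its vertex set. -/
def SimpleGraph.IsBlock {V : Type*} (G : SimpleGraph V) (B : Set V) : Prop :=
  (G.induce B).Connected ∧ (∀ v, ¬ (G.induce B).IsCutVertex v) ∧
    ∀ C : Set V, B ⊆ C → (G.induce C).Connected →
      (∀ v, ¬ (G.induce C).IsCutVertex v) → C = B

section Aux
open SimpleGraph
open Fin.CommRing

lemma aux_key (n a d : ℕ) (hn : 3 ≤ n) (ha : a < n) (hd1 : 1 ≤ d) (hd2 : d < n / 2) :
    ((a + d) % n) % ((n + 1) / 2) ≠ a % ((n + 1) / 2) := by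
  set m := (n + 1) / 2 with hm
  have hy : (a + d) % n = if a + d < n then a + d else a + d - n := by
    split
    · exact Nat.mod_eq_of_lt ‹_›
    · rw [Nat.mod_eq_sub_mod (by omega), Nat.mod_eq_of_lt (by omega)]
  have hmod : ∀ x, x < n → x % m = if x < m then x else x - m := by
    intro x hx
    split
    · exact Nat.mod_eq_of_lt ‹_›
    · rw [Nat.mod_eq_sub_mod (by omega), Nat.mod_eq_of_lt (by omega)]
  rw [hy]
  split <;> rw [hmod _ (by omega), hmod a (by omega)] <;> split <;> split <;> omega

lemma aux_adj_succ {n : ℕ} [NeZero n] (hn : 3 ≤ n) (a : Fin n) :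
    (SimpleGraph.cycleGraph n).Adj a (a + 1) := by
  rw [SimpleGraph.cycleGraph_adj']
  right
  have h1 : (a + 1 - a : Fin n) = 1 := by ring
  rw [h1, Fin.val_one' n, Nat.mod_eq_of_lt (by omega)]

def auxArcWalk {n : ℕ} [NeZero n] (hn : 3 ≤ n) : (ℓ : ℕ) → (a : Fin n) →
    (SimpleGraph.cycleGraph n).Walk a (a + (ℓ : Fin n))
  | 0, a => SimpleGraph.Walk.nil.copy rfl (by simp)
  | (ℓ+1), a =>
      (SimpleGraph.Walk.cons (aux_adj_succ hn a) (auxArcWalk hn ℓ (a+1))).copy rfl (by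
        push_cast; ring)

lemma auxArcWalk_support {n : ℕ} [NeZero n] (hn : 3 ≤ n) :
    ∀ (ℓ : ℕ) (a : Fin n), (auxArcWalk hn ℓ a).support
      = (List.range (ℓ + 1)).map (fun i : ℕ => a + (i : Fin n))
  | 0, a => by
      rw [auxArcWalk, SimpleGraph.Walk.support_copy, SimpleGraph.Walk.support_nil,
        List.range_succ, List.range_zero]
      simp
  | (ℓ+1), a => by
    rw [auxArcWalk]
    rw [SimpleGraph.Walk.support_copy, SimpleGraph.Walk.support_cons,
      auxArcWalk_support hn ℓ (a+1)]
    conv_rhs => rw [List.range_succ_eq_map]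
    simp only [List.map_cons, List.map_map]
    congr 1
    · simp
    · apply List.map_congr_left
      intro i _
      simp only [Function.comp_apply]
      push_cast
      ring

lemma auxArcWalk_isPath {n : ℕ} [NeZero n] (hn : 3 ≤ n) (ℓ : ℕ) (hℓ : ℓ < n) (a : Fin n) :
    (auxArcWalk hn ℓ a).IsPath := by
  rw [SimpleGraph.Walk.isPath_def, auxArcWalk_support]
  refine List.nodup_range.map_on ?_
  intro i hi j hj hij
  simp only [List.mem_range] at hi hj
  have h1 : (i : Fin n) = (j : Fin n) := add_left_cancel hij
  have h2 := congrArg Fin.val h1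
  rwa [Fin.val_natCast, Fin.val_natCast, Nat.mod_eq_of_lt (by omega),
    Nat.mod_eq_of_lt (by omega)] at h2

lemma aux_tail_dropLast {α : Type*} (l : List α) : l.tail.dropLast = l.dropLast.tail := by
  cases l with
  | nil => rfl
  | cons a t =>
    cases t with
    | nil => rfl
    | cons b t => simp [List.dropLast_cons₂]

lemma aux_internal_reverse {V : Type*} {G : SimpleGraph V} {u v : V} (p : G.Walk u v) :
    p.reverse.internalVertices = p.internalVertices.reverse := by
  unfold SimpleGraph.Walk.internalVertices
  rw [SimpleGraph.Walk.support_reverse, List.tail_reverse]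
  have h : ∀ l : List V, l.reverse.dropLast = l.tail.reverse := by
    intro l
    have := List.tail_reverse (l := l.reverse)
    rw [List.reverse_reverse] at this
    rw [this, List.reverse_reverse]
  rw [h, aux_tail_dropLast]

lemma aux_internal_copy {V : Type*} {G : SimpleGraph V} {u v u' v' : V} (p : G.Walk u v)
    (hu : u = u') (hv : v = v') :
    (p.copy hu hv).internalVertices = p.internalVertices := by
  unfold SimpleGraph.Walk.internalVertices
  rw [SimpleGraph.Walk.support_copy]

lemma auxArcWalk_internal {n : ℕ} [NeZero n] (hn : 3 ≤ n) (ℓ : ℕ) (a : Fin n) :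
    (auxArcWalk hn ℓ a).internalVertices
      = (List.range (ℓ - 1)).map (fun i : ℕ => a + (((i + 1 : ℕ)) : Fin n)) := by
  unfold SimpleGraph.Walk.internalVertices
  rw [auxArcWalk_support]
  cases ℓ with
  | zero => simp [List.range_succ]
  | succ e =>
    conv_lhs => rw [List.range_succ_eq_map, List.map_cons, List.tail_cons]
    rw [List.map_map, List.range_succ, List.map_append, List.map_singleton, List.dropLast_concat]
    simp [Function.comp]

lemma auxArcWalk_colors {n : ℕ} [NeZero n] (hn : 3 ≤ n) (ℓ : ℕ) (hℓ2 : ℓ ≤ n / 2)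
    (a : Fin n) :
    (((auxArcWalk hn ℓ a).internalVertices).map
      (fun i : Fin n => i.val % ((n + 1) / 2))).Nodup := by
  rw [auxArcWalk_internal, List.map_map]
  refine List.nodup_range.map_on ?_
  have hval : ∀ k : ℕ, ((a + (k : Fin n)).val) = (a.val + k) % n := by
    intro k
    rw [Fin.val_add, Fin.val_natCast]
    conv_rhs => rw [Nat.add_mod]
    rw [Nat.mod_eq_of_lt a.isLt]
  have key2 : ∀ i j : ℕ, i < j → j < ℓ - 1 →
      (a.val + (i + 1)) % n % ((n + 1) / 2) ≠ (a.val + (j + 1)) % n % ((n + 1) / 2) := by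
    intro i j hij hj hcon
    have heq : ((a.val + (i + 1)) % n + (j - i)) % n = (a.val + (j + 1)) % n := by
      rw [Nat.mod_add_mod]
      congr 1
      omega
    exact aux_key n ((a.val + (i + 1)) % n) (j - i) hn (Nat.mod_lt _ (by omega))
      (by omega) (by omega) (by rw [heq, hcon])
  intro i hi j hj hij
  simp only [List.mem_range, Function.comp_apply] at hi hj hij
  rw [hval, hval] at hij
  rcases lt_trichotomy i j with h | h | h
  · exact absurd hij (key2 i j h hj)
  · exact h
  · exact absurd hij.symm (key2 j i h hi)

end Aux


/-- `rvc (Cₙ) ≤ ⌈n/2⌉` for all `n ≥ 3`; in particular the coloring that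
colors the `i`-th vertex (`0`-indexed) by `i mod ⌈n/2⌉` makes `Cₙ` rainbow
vertex-connected.  (Here `⌈n/2⌉ = (n + 1) / 2` with natural division.) -/
theorem rvc_cycleGraph_le_ceil_half (n : ℕ) (hn : 3 ≤ n) :
    (SimpleGraph.cycleGraph n).RainbowVertexConnected
      (fun i : Fin n =>
        (⟨i.val % ((n + 1) / 2), Nat.mod_lt _ (by omega)⟩ : Fin ((n + 1) / 2))) ∧
    (SimpleGraph.cycleGraph n).rvc ≤ (n + 1) / 2 := by
  haveI : NeZero n := ⟨by omega⟩
  open Fin.CommRing in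
  have master : ∀ u v : Fin n, u ≠ v → ∃ p : (SimpleGraph.cycleGraph n).Walk u v,
      p.IsPath ∧ (p.internalVertices.map (fun i : Fin n => i.val % ((n + 1) / 2))).Nodup := by
    intro u v huv
    have hvu : v - u ≠ 0 := sub_ne_zero.mpr (Ne.symm huv)
    set d := (v - u).val with hd
    have hd0 : d ≠ 0 := by
      intro h0
      exact hvu (Fin.ext (by rw [← hd, h0, Fin.val_zero]))
    have hdn : d < n := (v - u).isLt
    rcases le_or_gt d (n / 2) with h | h
    · have hend : u + ((d : ℕ) : Fin n) = v := by
        rw [hd, Fin.cast_val_eq_self]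
        ring
      refine ⟨(auxArcWalk hn d u).copy rfl hend, ?_, ?_⟩
      · rw [SimpleGraph.Walk.isPath_copy]
        exact auxArcWalk_isPath hn d (by omega) u
      · rw [aux_internal_copy]
        exact auxArcWalk_colors hn d (by omega) u
    · have hval : (u - v).val = n - d := by
        have h1 : u - v = -(v - u) := by ring
        rw [h1, Fin.neg_def]
        simp only [← hd]
        exact Nat.mod_eq_of_lt (by omega)
      have hend : v + ((n - d : ℕ) : Fin n) = u := by
        rw [← hval, Fin.cast_val_eq_self]
        ring
      refine ⟨((auxArcWalk hn (n - d) v).copy rfl hend).reverse, ?_, ?_⟩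
      · apply SimpleGraph.Walk.IsPath.reverse
        rw [SimpleGraph.Walk.isPath_copy]
        exact auxArcWalk_isPath hn (n - d) (by omega) v
      · rw [aux_internal_reverse, aux_internal_copy, List.map_reverse, List.nodup_reverse]
        exact auxArcWalk_colors hn (n - d) (by omega) v
  constructor
  · intro u v huv
    obtain ⟨p, hp, hnd⟩ := master u v huv
    refine ⟨p, hp, ?_⟩
    apply List.Nodup.of_map (Fin.val)
    rw [List.map_map]
    exact hnd
  · apply Nat.sInf_le
    refine ⟨fun i => i.val % ((n + 1) / 2), fun u v huv => ?_⟩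
    obtain ⟨p, hp, hnd⟩ := master u v huv
    exact ⟨p, ⟨hp, hnd⟩, fun w _ => Nat.mod_lt _ (by omega)⟩
end

section
/- If n = 14 or n ≥ 16, then every vertex coloring of the cycle C_n using at most ⌈n/2⌉ − 1 colors fails to make C_n rainbow vertex-connected; that is, rvc(C_n) ≥ ⌈n/2⌉. -/
open List in
lemma map_range_succ' {α : Type*} (f : ℕ → α) (L : ℕ) :
    (List.range (L+1)).map f = f 0 :: (List.range L).map (fun i => f (i+1)) := by
  rw [List.range_succ_eq_map, List.map_cons, List.map_map]
  rfl

open SimpleGraph List Fin.NatCast Fin.CommRing in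
lemma cycle_walk_support {N : ℕ} : ∀ {u v : Fin (N+2)}
    (p : (SimpleGraph.cycleGraph (N+2)).Walk u v), p.IsPath →
    ∃ s : Fin (N+2), (s = 1 ∨ s = -1) ∧
      p.support = (List.range (p.length + 1)).map (fun i : ℕ => u + (i : Fin (N+2)) * s) ∧
      v = u + (p.length : Fin (N+2)) * s := by
  intro u v p
  induction p with
  | nil => intro _; exact ⟨1, Or.inl rfl, by simp [List.range_succ], by simp⟩
  | @cons u w v h q ih =>
    intro hp
    rw [SimpleGraph.Walk.cons_isPath_iff] at hp
    obtain ⟨hq, hu⟩ := hp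
    obtain ⟨s, hs, hsup, hv⟩ := ih hq
    rw [cycleGraph_adj] at h
    obtain ⟨t, ht, hw⟩ : ∃ t : Fin (N+2), (t = 1 ∨ t = -1) ∧ w = u + t := by
      rcases h with h | h
      · exact ⟨-1, Or.inr rfl, by rw [← h]; ring⟩
      · exact ⟨1, Or.inl rfl, by rw [← h]; ring⟩
    have hor : q.length = 0 ∨ s = t := by
      rcases Nat.eq_zero_or_pos q.length with h0 | h1
      · exact Or.inl h0
      · refine Or.inr ?_
        by_contra hne
        have hst : s = -t := by
          rcases hs with rfl | rfl <;> rcases ht with rfl | rfl <;> simp_all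
        have : u ∈ q.support := by
          rw [hsup]
          have h1' : (1 : ℕ) ∈ List.range (q.length + 1) := by
            simp only [List.mem_range]; omega
          have := List.mem_map_of_mem (f := fun i : ℕ => w + (i : Fin (N+2)) * s) h1'
          simpa [hw, hst] using this
        exact hu this
    refine ⟨t, ht, ?_, ?_⟩
    · show u :: q.support = (List.range (q.length + 1 + 1)).map
        (fun i : ℕ => u + (i : Fin (N+2)) * t)
      rw [map_range_succ' (fun i : ℕ => u + (i : Fin (N+2)) * t) (q.length + 1), hsup]
      congr 1
      · simp
      · apply List.map_congr_left
        intro i hi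
        rw [List.mem_range] at hi
        rcases hor with h0 | rfl
        · have : i = 0 := by omega
          subst this
          simp [hw]
        · push_cast
          rw [hw]; ring
    · show v = u + ((q.length + 1 : ℕ) : Fin (N+2)) * t
      calc v = w + (q.length : Fin (N+2)) * s := hv
        _ = u + ((q.length + 1 : ℕ) : Fin (N+2)) * t := by
            rcases hor with h0 | rfl
            · simp only [h0]
              push_cast
              simp [hw]
            · subst hw
              push_cast
              ring

open List in
lemma map_range_dropLast {α : Type*} (f : ℕ → α) (L : ℕ) :
    ((List.range L).map f).dropLast = (List.range (L-1)).map f := by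
  cases L with
  | zero => simp
  | succ L =>
    rw [List.range_succ, List.map_append, List.map_singleton, List.dropLast_concat]
    simp

open SimpleGraph List Fin.NatCast Fin.CommRing in
lemma window_lemma {N : ℕ} (hn : 14 ≤ N + 2) {α : Type*} (c : Fin (N+2) → α)
    (hc : (Set.range c).ncard ≤ (N + 3) / 2 - 1)
    (hR : (SimpleGraph.cycleGraph (N+2)).RainbowVertexConnected c) :
    ∀ a : Fin (N+2), ∀ i j : ℕ, i < (N+2)/2 - 2 → j < (N+2)/2 - 2 →
      c (a + (i : Fin (N+2))) = c (a + (j : Fin (N+2))) → i = j := by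
  classical
  intro a i j hi hj hceq
  obtain ⟨n, hn2⟩ : ∃ n, N + 2 = n := ⟨_, rfl⟩
  obtain ⟨m, hm⟩ : ∃ m, (N+2)/2 = m := ⟨_, rfl⟩
  obtain ⟨k, hk⟩ : ∃ k, (N+3)/2 - 1 = k := ⟨_, rfl⟩
  rw [hm] at hi hj
  rw [hk] at hc
  have hd1 : 1 ≤ m - 1 := by omega
  have hdn : m - 1 < N + 2 := by omega
  set d := m - 1 with hd
  set u := a - 1 with hu
  set v := u + ((d : ℕ) : Fin (N+2)) with hv0
  have hdcast : (((d : ℕ) : Fin (N+2)) : ℕ) = d := Fin.val_cast_of_lt hdn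
  have huv : u ≠ v := by
    intro h
    have h0 : ((d : ℕ) : Fin (N+2)) = 0 := by
      rw [hv0] at h
      exact (left_eq_add.mp h)
    rw [h0] at hdcast
    simp only [Fin.val_zero] at hdcast
    omega
  obtain ⟨p, hpath, hnod⟩ := hR u v huv
  obtain ⟨s, hs, hsup, hvend⟩ := cycle_walk_support p hpath
  obtain ⟨l, hl⟩ : ∃ l, p.length = l := ⟨_, rfl⟩
  rw [hl] at hsup hvend
  have hln : l < N + 2 := by
    have := hpath.length_lt
    rw [hl] at this
    simpa [Fintype.card_fin] using this
  have hl1 : 1 ≤ l := by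
    rcases Nat.eq_zero_or_pos l with h0 | h1
    · exfalso
      apply huv
      rw [hvend, h0]
      simp
    · exact h1
  have hint : p.internalVertices
      = (List.range (l - 1)).map (fun i : ℕ => u + ((i+1 : ℕ) : Fin (N+2)) * s) := by
    show p.support.tail.dropLast = _
    rw [hsup, map_range_succ', List.tail_cons, map_range_dropLast]
  have hinj : ∀ x ∈ List.range (l-1), ∀ y ∈ List.range (l-1),
      c (u + ((x+1 : ℕ) : Fin (N+2)) * s) = c (u + ((y+1 : ℕ) : Fin (N+2)) * s) → x = y := by
    have h2 := hnod
    rw [hint, List.map_map] at h2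
    exact (List.nodup_map_iff_inj_on List.nodup_range).mp h2
  rcases hs with rfl | rfl
  · -- forward arc: l = d
    have hld : l = d := by
      have hcc : ((d : ℕ) : Fin (N+2)) = ((l : ℕ) : Fin (N+2)) := by
        have h2 : u + ((d : ℕ) : Fin (N+2)) = u + (l : Fin (N+2)) * 1 := by
          rw [← hv0, hvend]
        have h3 := add_left_cancel h2
        simpa using h3
      have e2 : ((l : ℕ) : Fin (N+2)).val = l := Fin.val_cast_of_lt hln
      rw [hcc] at hdcast
      omega
    apply hinj i (by rw [List.mem_range]; omega) j (by rw [List.mem_range]; omega)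
    have hai : ∀ x : ℕ, u + ((x+1 : ℕ) : Fin (N+2)) * 1 = a + (x : Fin (N+2)) := by
      intro x
      rw [hu]
      push_cast
      ring
    rw [hai, hai]
    exact hceq
  · -- backward arc: contradiction, too many internal vertices
    exfalso
    have hld : l = (N + 2) - d := by
      have hnd : (((N+2) - d : ℕ) : Fin (N+2)) = -((d : ℕ) : Fin (N+2)) := by
        have h2 : (((N+2) - d : ℕ) : Fin (N+2)) + ((d : ℕ) : Fin (N+2)) = 0 := by
          rw [← Nat.cast_add, show (N+2) - d + d = N + 2 by omega]
          exact Fin.natCast_self (N+2)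
        linear_combination h2
      have hcc : (((N+2) - d : ℕ) : Fin (N+2)) = ((l : ℕ) : Fin (N+2)) := by
        rw [hnd]
        have h2 : u + ((d : ℕ) : Fin (N+2)) = u + (l : Fin (N+2)) * (-1) := by
          rw [← hv0, hvend]
        have h3 := add_left_cancel h2
        rw [h3]; ring
      have e1 : (((N+2) - d : ℕ) : Fin (N+2)).val = (N+2) - d :=
        Fin.val_cast_of_lt (by omega)
      have e2 : ((l : ℕ) : Fin (N+2)).val = l := Fin.val_cast_of_lt hln
      rw [hcc] at e1
      omega
    have hsub : ↑(p.internalVertices.map c).toFinset ⊆ Set.range c := by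
      intro x hx
      simp only [List.coe_toFinset, Set.mem_setOf_eq, List.mem_map] at hx
      obtain ⟨w, _, rfl⟩ := hx
      exact Set.mem_range_self w
    have hcard : (p.internalVertices.map c).toFinset.card = l - 1 := by
      rw [List.toFinset_card_of_nodup hnod, List.length_map, hint,
        List.length_map, List.length_range]
    have hle : l - 1 ≤ (Set.range c).ncard := by
      have h2 := Set.ncard_le_ncard hsub (Set.finite_range c)
      rwa [Set.ncard_coe_finset, hcard] at h2
    omega

open SimpleGraph List Fin.NatCast Fin.CommRing in
lemma main_lemma {N : ℕ} (hn : 14 ≤ N + 2) (h3m : N + 2 + 7 ≤ 3 * ((N+2)/2))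
    {α : Type*} (c : Fin (N+2) → α)
    (hc : (Set.range c).ncard ≤ (N + 3) / 2 - 1) :
    ¬ (SimpleGraph.cycleGraph (N+2)).RainbowVertexConnected c := by
  classical
  intro hR
  have W := window_lemma hn c hc hR
  have gap : ∀ (x : Fin (N+2)) (t : ℕ), 1 ≤ t → t ≤ N+1 →
      c x = c (x + (t : Fin (N+2))) → (N+2)/2 - 2 ≤ t := by
    intro x t h1 h2 hxy
    by_contra h
    push_neg at h
    have h0 := W x 0 t (by omega) (by omega) (by simpa using hxy)
    omega
  have key : ∀ (x : Fin (N+2)) (t₁ t₂ : ℕ), 1 ≤ t₁ → t₁ < t₂ → t₂ ≤ N+1 →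
      c x = c (x + (t₁ : Fin (N+2))) → c x = c (x + (t₂ : Fin (N+2))) → False := by
    intro x t₁ t₂ h1 h12 h2 e1 e2
    have g1 : (N+2)/2 - 2 ≤ t₁ := gap x t₁ h1 (by omega) e1
    have g2 : (N+2)/2 - 2 ≤ t₂ - t₁ := by
      apply gap (x + (t₁ : Fin (N+2))) (t₂ - t₁) (by omega) (by omega)
      have hre : (x + (t₁ : Fin (N+2))) + ((t₂ - t₁ : ℕ) : Fin (N+2))
          = x + (t₂ : Fin (N+2)) := by
        rw [add_assoc, ← Nat.cast_add, show t₁ + (t₂ - t₁) = t₂ by omega]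
      rw [hre]
      exact e1.symm.trans e2
    have g3 : (N+2)/2 - 2 ≤ (N+2) - t₂ := by
      apply gap (x + (t₂ : Fin (N+2))) ((N+2) - t₂) (by omega) (by omega)
      have hre : (x + (t₂ : Fin (N+2))) + (((N+2) - t₂ : ℕ) : Fin (N+2)) = x := by
        rw [add_assoc, ← Nat.cast_add, show t₂ + ((N+2) - t₂) = N+2 by omega,
          Fin.natCast_self]
        simp
      rw [hre]
      exact e2.symm
    omega
  have hrep : ∀ x y : Fin (N+2), x ≠ y →
      ∃ t : ℕ, 1 ≤ t ∧ t ≤ N+1 ∧ y = x + (t : Fin (N+2)) := by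
    intro x y hxy
    have hne : y - x ≠ 0 := sub_ne_zero_of_ne (Ne.symm hxy)
    have hv : (y - x).val ≠ 0 := by
      intro h
      exact hne (Fin.ext h)
    refine ⟨(y - x).val, by omega, by have := (y - x).isLt; omega, ?_⟩
    rw [Fin.cast_val_eq_self]
    ring
  have h2card : ∀ b, (Finset.univ.filter (fun x => c x = b)).card ≤ 2 := by
    intro b
    by_contra h
    push_neg at h
    obtain ⟨x, hx, y, hy, z, hz, hxy, hxz, hyz⟩ := Finset.two_lt_card.mp h
    rw [Finset.mem_filter] at hx hy hz
    obtain ⟨t₁, ht₁1, ht₁2, rfl⟩ := hrep x y hxy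
    obtain ⟨t₂, ht₂1, ht₂2, rfl⟩ := hrep x z hxz
    have e1 : c x = c (x + (t₁ : Fin (N+2))) := by rw [hx.2, hy.2]
    have e2 : c x = c (x + (t₂ : Fin (N+2))) := by rw [hx.2, hz.2]
    have htne : t₁ ≠ t₂ := by
      intro h
      exact hyz (by rw [h])
    rcases Nat.lt_or_ge t₁ t₂ with hlt | hge
    · exact key x t₁ t₂ ht₁1 hlt ht₂2 e1 e2
    · exact key x t₂ t₁ ht₂1 (by omega) ht₁2 e2 e1
  have hbig := Finset.card_le_mul_card_image (f := c) Finset.univ 2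
    (fun b _ => h2card b)
  have himg : (Finset.univ.image c).card = (Set.range c).ncard := by
    have hr : Set.range c = ↑(Finset.univ.image c) := by
      rw [Finset.coe_image, Finset.coe_univ, Set.image_univ]
    rw [hr, Set.ncard_coe_finset]
  rw [Finset.card_univ, Fintype.card_fin, himg] at hbig
  omega

/-- for `n = 14` or `n ≥ 16`, every vertex coloring of `Cₙ` using at most
`⌈n/2⌉ - 1` colors fails to make `Cₙ` rainbow vertex-connected; hence
`rvc (Cₙ) ≥ ⌈n/2⌉`.  (Here `⌈n/2⌉ = (n + 1) / 2` with natural division.) -/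
theorem ceil_half_le_rvc_cycleGraph (n : ℕ) (hn : n = 14 ∨ 16 ≤ n) :
    (∀ {α : Type*} (c : Fin n → α), (Set.range c).ncard ≤ (n + 1) / 2 - 1 →
      ¬ (SimpleGraph.cycleGraph n).RainbowVertexConnected c) ∧
    (n + 1) / 2 ≤ (SimpleGraph.cycleGraph n).rvc := by
  obtain ⟨N, rfl⟩ : ∃ N, n = N + 2 := ⟨n - 2, by omega⟩
  have hn14 : 14 ≤ N + 2 := by omega
  have h3m : N + 2 + 7 ≤ 3 * ((N+2)/2) := by omega
  refine ⟨fun {α} c hc => main_lemma hn14 h3m c hc, ?_⟩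
  have hnonempty : (SimpleGraph.cycleGraph (N+2)).RVCWith (N+2) := by
    refine ⟨Fin.val, ?_⟩
    intro u v huv
    obtain ⟨w⟩ := (SimpleGraph.cycleGraph_connected (n := N+1)).preconnected u v
    refine ⟨w.toPath.1, ⟨w.toPath.2, ?_⟩, fun x _ => x.isLt⟩
    apply List.Nodup.map Fin.val_injective
    have hnd := w.toPath.2.support_nodup
    exact ((List.dropLast_sublist _).trans (List.tail_sublist _)).nodup hnd
  unfold SimpleGraph.rvc
  apply le_csInf ⟨N+2, by exact hnonempty⟩
  intro k hk
  by_contra hlt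
  push_neg at hlt
  obtain ⟨c, hcp⟩ := hk
  have hfalse := main_lemma hn14 h3m (fun w => if c w < k then c w else 0) ?_ ?_
  · exact hfalse
  · -- ncard bound
    have hsub : Set.range (fun w : Fin (N+2) => if c w < k then c w else 0)
        ⊆ ↑(Finset.range (max k 1)) := by
      rintro x ⟨w, rfl⟩
      simp only [Finset.coe_range, Set.mem_Iio]
      split
      · omega
      · omega
    have h1 := Set.ncard_le_ncard hsub (Set.finite_coe_iff.mp inferInstance)
    rw [Set.ncard_coe_finset, Finset.card_range] at h1
    omega
  · -- still rainbow vertex connected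
    intro u v huv
    obtain ⟨p, ⟨hp, hnod⟩, hcol⟩ := hcp u v huv
    refine ⟨p, hp, ?_⟩
    have hmap : p.internalVertices.map (fun w => if c w < k then c w else 0)
        = p.internalVertices.map c := by
      apply List.map_congr_left
      intro w hw
      exact if_pos (hcol w hw)
    rw [hmap]
    exact hnod
end

section
/- For n ∈ {11, 13, 15}, every vertex coloring of the cycle C_n using at most ⌈n/2⌉ − 2 colors fails to make C_n rainbow vertex-connected; consequently rvc(C_n) ≥ ⌈n/2⌉ − 1 for these values of n. -/
section RVCAux

open SimpleGraph
open scoped Fin.NatCast Fin.CommRing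

lemma support_eq_map' {V : Type*} {G : SimpleGraph V} {u v : V} (p : G.Walk u v) :
    p.support = (List.range (p.length + 1)).map p.getVert := by
  induction p with
  | nil => rfl
  | cons h q ih =>
    rw [Walk.support_cons, Walk.length_cons, List.range_succ_eq_map, List.map_cons,
      List.map_map, ih]
    simp [Function.comp_def, Walk.getVert_cons_succ]

lemma internal_eq' {V : Type*} {G : SimpleGraph V} {u v : V} (p : G.Walk u v) :
    p.internalVertices = (List.range (p.length - 1)).map (fun k => p.getVert (k+1)) := by
  unfold Walk.internalVertices
  rw [support_eq_map', List.range_succ_eq_map, List.map_cons, List.tail_cons, List.map_map]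
  cases hL : p.length with
  | zero => simp
  | succ M =>
    rw [List.range_succ, List.map_append, List.map_singleton, List.dropLast_concat]
    simp [Function.comp_def, Nat.succ_eq_add_one]

lemma direction' {n : ℕ} {u v : Fin (n+2)} (p : (cycleGraph (n+2)).Walk u v)
    (hp : p.IsPath) :
    (∀ k ≤ p.length, p.getVert k = u + (k : Fin (n+2))) ∨
    (∀ k ≤ p.length, p.getVert k = u - (k : Fin (n+2))) := by
  induction p with
  | nil => left; intro k hk; simp_all [Nat.le_zero]
  | @cons u w v h q ih =>
    rw [Walk.cons_isPath_iff] at hp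
    obtain ⟨hq, hu⟩ := hp
    rcases cycleGraph_adj.mp h with hw | hw
    · -- u - w = 1, w = u - 1
      have hw' : w = u - 1 := by rw [← hw]; ring
      rcases ih hq with hdir | hdir
      · by_cases h0 : q.length = 0
        · right
          intro k hk
          simp only [Walk.length_cons, h0] at hk
          interval_cases k
          · simp
          · rw [Walk.getVert_cons_succ, Walk.getVert_zero, hw']; push_cast; ring
        · exfalso
          apply hu
          rw [Walk.mem_support_iff_exists_getVert]
          refine ⟨1, ?_, by omega⟩
          rw [hdir 1 (by omega), hw']; push_cast; ring
      · right
        intro k hk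
        cases k with
        | zero => simp
        | succ k =>
          rw [Walk.getVert_cons_succ, hdir k (by simp only [Walk.length_cons] at hk; omega), hw']
          push_cast; ring
    · -- w - u = 1, w = u + 1
      have hw' : w = u + 1 := by rw [← hw]; ring
      rcases ih hq with hdir | hdir
      · left
        intro k hk
        cases k with
        | zero => simp
        | succ k =>
          rw [Walk.getVert_cons_succ, hdir k (by simp only [Walk.length_cons] at hk; omega), hw']
          push_cast; ring
      · by_cases h0 : q.length = 0
        · left
          intro k hk
          simp only [Walk.length_cons, h0] at hk
          interval_cases k
          · simp
          · rw [Walk.getVert_cons_succ, Walk.getVert_zero, hw']; push_cast; ring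
        · exfalso
          apply hu
          rw [Walk.mem_support_iff_exists_getVert]
          refine ⟨1, ?_, by omega⟩
          rw [hdir 1 (by omega), hw']; push_cast; ring

lemma path_len_le' {n : ℕ} {u v : Fin n} {G : SimpleGraph (Fin n)} {p : G.Walk u v}
    (hp : p.IsPath) : p.length + 1 ≤ n := by
  have h1 := hp.support_nodup.length_le_card
  simpa [Walk.length_support] using h1

lemma cast_inj_of_lt' {n : ℕ} {a b : ℕ} (ha : a < n+2) (hb : b < n+2)
    (h : ((a:ℕ) : Fin (n+2)) = ((b:ℕ) : Fin (n+2))) : a = b := by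
  have := congrArg Fin.val h
  rwa [Fin.val_cast_of_lt ha, Fin.val_cast_of_lt hb] at this

lemma classify' {n d : ℕ} (hdn : 2*d + 2 < n + 2) {a : Fin (n+2)}
    (p : (cycleGraph (n+2)).Walk a (a + ((d+1 : ℕ) : Fin (n+2)))) (hp : p.IsPath) :
    (p.length = d + 1 ∧ ∀ k ≤ p.length, p.getVert k = a + ((k:ℕ) : Fin (n+2)))
    ∨ p.length = n + 1 - d := by
  have hle : p.length + 1 ≤ n + 2 := path_len_le' hp
  have hget := p.getVert_length
  rcases direction' p hp with hdir | hdir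
  · left
    have h1 := hdir p.length le_rfl
    rw [hget] at h1
    have h2 : ((p.length : ℕ) : Fin (n+2)) = ((d+1 : ℕ) : Fin (n+2)) :=
      add_left_cancel h1.symm
    exact ⟨cast_inj_of_lt' (by omega) (by omega) h2, hdir⟩
  · right
    have h1 := hdir p.length le_rfl
    rw [hget] at h1
    have h2 : ((p.length : ℕ) : Fin (n+2)) = -((d+1 : ℕ) : Fin (n+2)) := by
      linear_combination h1
    have h3 : ((n + 1 - d : ℕ) : Fin (n+2)) = -((d+1 : ℕ) : Fin (n+2)) := by
      rw [eq_neg_iff_add_eq_zero, ← Nat.cast_add]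
      have h4 : n + 1 - d + (d + 1) = n + 2 := by omega
      rw [h4, Fin.natCast_self]
    exact cast_inj_of_lt' (by omega) (by omega) (h2.trans h3.symm)

lemma core1' {n d : ℕ} (hd : 2 ≤ d) (hN : n + 2 = 2*d + 3) {j : ℕ} (hj0 : 0 < j) (hjd : j < d)
    (hstep : ((0:Fin (n+2)) + ((0+1 : ℕ) : Fin (n+2))) + ((d:ℕ) : Fin (n+2)) + ((d:ℕ) : Fin (n+2))
        + ((d:ℕ) : Fin (n+2)) = (0:Fin (n+2)) + (((j+1 : ℕ)) : Fin (n+2)))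
    {α : Type*} (c : Fin (n+2) → α) (hcard : (Set.range c).ncard ≤ d)
    (hrvc : (cycleGraph (n+2)).RainbowVertexConnected c) : False := by
  classical
  have hdn : 2*d + 2 < n + 2 := by omega
  have hfin : (Set.range c).Finite := Set.finite_range c
  set f : Fin (n+2) → ℕ → α := fun a k => c (a + ((k+1 : ℕ) : Fin (n+2))) with hf
  have hwin : ∀ a : Fin (n+2), ((List.range d).map (f a)).Nodup := by
    intro a
    have hne : a ≠ a + ((d+1 : ℕ) : Fin (n+2)) := by
      intro h
      have h0 : ((d+1 : ℕ) : Fin (n+2)) = 0 := (left_eq_add).mp h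
      have := congrArg Fin.val h0
      rw [Fin.val_cast_of_lt (by omega)] at this
      simp at this
    obtain ⟨p, hp, hnd⟩ := hrvc a _ hne
    rcases classify' hdn p hp with ⟨hL, hget⟩ | hL
    · have heq : p.internalVertices.map c = (List.range d).map (f a) := by
        rw [internal_eq', hL, List.map_map, Nat.add_sub_cancel]
        refine List.map_congr_left ?_
        intro k hk
        rw [List.mem_range] at hk
        simp only [Function.comp_apply, hf]
        rw [hget (k+1) (by omega)]
      rwa [heq] at hnd
    · exfalso
      have hlen : (p.internalVertices.map c).length = d + 1 := by
        rw [internal_eq', List.map_map, List.length_map, List.length_range]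
        omega
      have hsub : ↑(p.internalVertices.map c).toFinset ⊆ Set.range c := by
        intro x hx
        simp only [Finset.coe_sort_coe, List.coe_toFinset, Set.mem_setOf_eq] at hx
        obtain ⟨w, _, rfl⟩ := List.mem_map.mp hx
        exact Set.mem_range_self w
      have hcardT : (↑(p.internalVertices.map c).toFinset : Set α).ncard = d + 1 := by
        rw [Set.ncard_coe_finset, List.toFinset_card_of_nodup hnd, hlen]
      have := Set.ncard_le_ncard hsub hfin
      omega
  have hmem : ∀ a : Fin (n+2), ∃ k < d, c a = f a k := by
    intro a
    have hT : (↑((List.range d).map (f a)).toFinset : Set α) = Set.range c := by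
      apply Set.eq_of_subset_of_ncard_le
      · intro x hx
        simp only [List.coe_toFinset, Set.mem_setOf_eq] at hx
        obtain ⟨w, _, rfl⟩ := List.mem_map.mp hx
        exact Set.mem_range_self _
      · rw [Set.ncard_coe_finset, List.toFinset_card_of_nodup (hwin a), List.length_map,
          List.length_range]
        exact hcard
      · exact hfin
    have hca : c a ∈ (↑((List.range d).map (f a)).toFinset : Set α) := by
      rw [hT]; exact Set.mem_range_self a
    simp only [List.coe_toFinset, Set.mem_setOf_eq, List.mem_map, List.mem_range] at hca
    obtain ⟨k, hk, hck⟩ := hca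
    exact ⟨k, hk, hck.symm⟩
  have hinj : ∀ (a : Fin (n+2)) {i j : ℕ}, i < d → j < d → f a i = f a j → i = j := by
    intro a i j hi hj hij
    have := (List.nodup_map_iff_inj_on List.nodup_range).mp (hwin a)
    exact this i (List.mem_range.mpr hi) j (List.mem_range.mpr hj) hij
  have hper : ∀ a : Fin (n+2), c a = c (a + ((d:ℕ) : Fin (n+2))) := by
    intro a
    obtain ⟨k, hk, hck⟩ := hmem a
    have hkd : k = d - 1 := by
      by_contra hne
      have hk1 : k + 1 < d := by omega
      have e0 : f (a - 1) 0 = c a := by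
        simp only [hf]
        congr 1
        push_cast
        ring
      have e1 : f (a - 1) (k+1) = f a k := by
        simp only [hf]
        congr 1
        push_cast
        ring
      have := hinj (a - 1) (by omega : (0:ℕ) < d) hk1 (by rw [e0, e1, hck])
      omega
    subst hkd
    have hcast : ((d - 1 + 1 : ℕ) : Fin (n+2)) = ((d : ℕ) : Fin (n+2)) := by
      congr 1
      omega
    rw [hck]
    simp only [hf]
    rw [hcast]
  have key : f 0 0 = f 0 j := by
    simp only [hf]
    calc c (0 + ((0+1:ℕ) : Fin (n+2)))
        = c (0 + ((0+1:ℕ) : Fin (n+2)) + ((d:ℕ) : Fin (n+2))) := hper _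
      _ = c (0 + ((0+1:ℕ) : Fin (n+2)) + ((d:ℕ) : Fin (n+2)) + ((d:ℕ) : Fin (n+2))) := hper _
      _ = c (0 + ((0+1:ℕ) : Fin (n+2)) + ((d:ℕ) : Fin (n+2)) + ((d:ℕ) : Fin (n+2))
            + ((d:ℕ) : Fin (n+2))) := hper _
      _ = c (0 + ((j+1:ℕ) : Fin (n+2))) := by rw [hstep]
  have := hinj 0 (by omega : (0:ℕ) < d) hjd key
  omega

lemma rvcwith_card' (n : ℕ) : (cycleGraph (n+2)).RVCWith (n+2) := by
  classical
  refine ⟨Fin.val, fun u v huv => ?_⟩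
  obtain ⟨w⟩ := cycleGraph_preconnected u v
  have hsub : w.toPath.1.internalVertices.Sublist w.toPath.1.support :=
    (List.dropLast_sublist _).trans (List.tail_sublist _)
  refine ⟨w.toPath.1, ⟨w.toPath.2, ?_⟩, fun x _ => x.is_lt⟩
  exact (hsub.nodup w.toPath.2.support_nodup).map Fin.val_injective

lemma core2' {n d : ℕ} (hd : 2 ≤ d) (hN : n + 2 = 2*d + 3) {j : ℕ} (hj0 : 0 < j) (hjd : j < d)
    (hstep : ((0:Fin (n+2)) + ((0+1 : ℕ) : Fin (n+2))) + ((d:ℕ) : Fin (n+2)) + ((d:ℕ) : Fin (n+2))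
        + ((d:ℕ) : Fin (n+2)) = (0:Fin (n+2)) + (((j+1 : ℕ)) : Fin (n+2))) :
    d + 1 ≤ (cycleGraph (n+2)).rvc := by
  by_contra hlt
  push_neg at hlt
  have hSne : {k | (cycleGraph (n+2)).RVCWith k}.Nonempty := ⟨n+2, rvcwith_card' n⟩
  have hmemS := Nat.sInf_mem hSne
  set k := sInf {k | (cycleGraph (n+2)).RVCWith k} with hk
  have hkd : k ≤ d := by
    have : k < d + 1 := hlt
    omega
  obtain ⟨c, hc⟩ := hmemS
  set c' : Fin (n+2) → ℕ := fun v => if c v < k then c v else 0 with hc'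
  have hrvc : (cycleGraph (n+2)).RainbowVertexConnected c' := by
    intro u v huv
    obtain ⟨p, ⟨hp, hnd⟩, hcol⟩ := hc u v huv
    refine ⟨p, hp, ?_⟩
    have heq : p.internalVertices.map c' = p.internalVertices.map c :=
      List.map_congr_left fun w hw => if_pos (hcol w hw)
    rwa [heq]
  have hsub : Set.range c' ⊆ ↑(Finset.range d) := by
    rintro x ⟨v, rfl⟩
    simp only [Finset.coe_range, Set.mem_Iio, hc']
    split <;> omega
  have hcard : (Set.range c').ncard ≤ d := by
    have h1 := Set.ncard_le_ncard hsub (Finset.finite_toSet _)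
    rwa [Set.ncard_coe_finset, Finset.card_range] at h1
  exact core1' hd hN hj0 hjd hstep c' hcard hrvc

end RVCAux

/-- for `n ∈ {11, 13, 15}`, every vertex coloring of `Cₙ` using at most
`⌈n/2⌉ - 2` colors fails to make `Cₙ` rainbow vertex-connected; hence
`rvc (Cₙ) ≥ ⌈n/2⌉ - 1`.  (Here `⌈n/2⌉ = (n + 1) / 2` with natural division.) -/
theorem ceil_half_sub_one_le_rvc_cycleGraph (n : ℕ) (hn : n = 11 ∨ n = 13 ∨ n = 15) :
    (∀ {α : Type*} (c : Fin n → α), (Set.range c).ncard ≤ (n + 1) / 2 - 2 →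
      ¬ (SimpleGraph.cycleGraph n).RainbowVertexConnected c) ∧
    (n + 1) / 2 - 1 ≤ (SimpleGraph.cycleGraph n).rvc := by
  rcases hn with rfl | rfl | rfl
  · constructor
    · intro α c hc hrvc
      exact core1' (n := 9) (d := 4) (j := 1) (by norm_num) (by norm_num) (by norm_num)
        (by norm_num) (by decide) c (by simpa using hc) hrvc
    · have h := core2' (n := 9) (d := 4) (j := 1) (by norm_num) (by norm_num) (by norm_num)
        (by decide)
      simpa using h (by decide)
  · constructor
    · intro α c hc hrvc
      exact core1' (n := 11) (d := 5) (j := 2) (by norm_num) (by norm_num) (by norm_num)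
        (by norm_num) (by decide) c (by simpa using hc) hrvc
    · have h := core2' (n := 11) (d := 5) (j := 2) (by norm_num) (by norm_num) (by norm_num)
        (by decide)
      simpa using h (by decide)
  · constructor
    · intro α c hc hrvc
      exact core1' (n := 13) (d := 6) (j := 3) (by norm_num) (by norm_num) (by norm_num)
        (by norm_num) (by decide) c (by simpa using hc) hrvc
    · have h := core2' (n := 13) (d := 6) (j := 3) (by norm_num) (by norm_num) (by norm_num)
        (by decide)
      simpa using h (by decide)
end

section
/- The cycle C_9 on 9 vertices satisfies rvc(C_9) = 3. -/
namespace RVCAux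
open SimpleGraph
open Fin.NatCast

/-- walk along the cycle in the forward direction -/
def fwd (u : Fin 9) : (k : ℕ) → (cycleGraph 9).Walk u (u + (k : Fin 9))
  | 0 => Walk.nil.copy rfl (by simp)
  | k + 1 =>
    (Walk.cons (show (cycleGraph 9).Adj u (u + 1) by
        rw [cycleGraph_adj']; right; simp)
      (fwd (u + 1) k)).copy rfl (by push_cast; abel)

/-- the chosen walk between two vertices: the shorter arc -/
def myWalk (u v : Fin 9) : (cycleGraph 9).Walk u v :=
  if (v - u).val ≤ 4 then
    (fwd u (v - u).val).copy rfl (by simp [Fin.cast_val_eq_self])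
  else
    ((fwd v (u - v).val).copy rfl (by simp [Fin.cast_val_eq_self])).reverse

/-- the 3-coloring -/
def col (i : Fin 9) : ℕ := i.val % 3

lemma key : ∀ u v : Fin 9, u ≠ v →
    ((myWalk u v).support.Nodup ∧ (((myWalk u v).internalVertices).map col).Nodup) ∧
      ∀ w ∈ (myWalk u v).internalVertices, col w < 3 := by decide

/-- potential function for the lower bound -/
def pot (x y : Fin 9) : ℕ := min (x - y).val (y - x).val

lemma pot_step : ∀ x y z : Fin 9, (cycleGraph 9).Adj x y → pot x z ≤ pot y z + 1 := by decide

lemma pot_le_length {u v : Fin 9} (p : (cycleGraph 9).Walk u v) : pot u v ≤ p.length := by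
  induction p with
  | nil => simp [pot, sub_self]
  | cons h q ih =>
    simpa [Nat.add_comm] using (pot_step _ _ _ h).trans (Nat.add_le_add_right ih 1)

lemma not_rvcwith_two : ¬ (cycleGraph 9).RVCWith 2 := by
  rintro ⟨c, hc⟩
  obtain ⟨p, ⟨hpath, hnd⟩, hlt⟩ := hc 0 4 (by decide)
  -- internal vertices have at most 2 elements
  have hsub : (p.internalVertices.map c).toFinset ⊆ Finset.range 2 := by
    intro x hx
    simp only [List.mem_toFinset, List.mem_map] at hx
    obtain ⟨w, hw, rfl⟩ := hx
    simpa using hlt w hw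
  have hlen2 : p.internalVertices.length ≤ 2 := by
    have := Finset.card_le_card hsub
    rwa [List.toFinset_card_of_nodup hnd, Finset.card_range, List.length_map] at this
  have hsupp : p.support.length = p.length + 1 := p.length_support
  have hint : p.internalVertices.length = p.length - 1 := by
    simp [SimpleGraph.Walk.internalVertices, List.length_dropLast, List.length_tail, hsupp]
  have hplen : p.length ≤ 3 := by omega
  have := pot_le_length p
  have hpot : pot 0 4 = 4 := by decide
  omega

lemma rvcwith_three : (cycleGraph 9).RVCWith 3 := by
  refine ⟨col, fun u v huv => ⟨myWalk u v, ⟨?_, (key u v huv).1.2⟩, (key u v huv).2⟩⟩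
  rw [Walk.isPath_def]
  exact (key u v huv).1.1

end RVCAux

/-- `rvc (C₉) = 3`. -/
theorem rvc_cycleGraph_nine : (SimpleGraph.cycleGraph 9).rvc = 3 := by
  have h3 : (SimpleGraph.cycleGraph 9).RVCWith 3 := RVCAux.rvcwith_three
  have hlb : ∀ k ∈ {k | (SimpleGraph.cycleGraph 9).RVCWith k}, 3 ≤ k := by
    intro k hk
    by_contra hlt
    apply RVCAux.not_rvcwith_two
    obtain ⟨c, hc⟩ := hk
    refine ⟨c, fun u v huv => ?_⟩
    obtain ⟨p, hp, hw⟩ := hc u v huv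
    exact ⟨p, hp, fun w hw' => lt_of_lt_of_le (hw w hw') (by omega)⟩
  exact le_antisymm (Nat.sInf_le h3) (le_csInf ⟨3, h3⟩ hlb)
end

section
/- For each n ∈ {6, 7, 8, 10, 11, 12, 13, 15}, there exists a vertex coloring of the cycle C_n using at most ⌈n/2⌉ − 1 colors that makes C_n rainbow vertex-connected; that is, rvc(C_n) ≤ ⌈n/2⌉ − 1 for these values of n. -/
open SimpleGraph
open Fin.NatCast
open Fin.CommRing

/-- The walk of length `k` along the cycle starting at `u` in the forward direction. -/
def RVC.arcWalk {m : ℕ} : (k : ℕ) → (u : Fin (m+3)) →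
    (cycleGraph (m+3)).Walk u (u + (k : Fin (m+3)))
  | 0, u => Walk.nil.copy rfl (by simp)
  | (k+1), u =>
    (Walk.cons (by exact cycleGraph_adj.mpr (Or.inr (by ring))) (RVC.arcWalk k (u+1))).copy
      rfl (by push_cast; ring)

/-- The forward walk from `u` to `v` along the cycle. -/
def RVC.fwd {m : ℕ} (u v : Fin (m+3)) : (cycleGraph (m+3)).Walk u v :=
  (RVC.arcWalk (v-u).val u).copy rfl (by rw [Fin.cast_val_eq_self]; ring)

/-- The backward walk from `u` to `v` along the cycle. -/
def RVC.bwd {m : ℕ} (u v : Fin (m+3)) : (cycleGraph (m+3)).Walk u v :=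
  (RVC.fwd v u).reverse

/-- A decidable predicate: `p` is a rainbow path with internal colors `< k`. -/
def RVC.walkOK {V : Type*} [DecidableEq V] {G : SimpleGraph V} {u v : V}
    (c : V → ℕ) (k : ℕ) (p : G.Walk u v) : Prop :=
  p.support.Nodup ∧ (p.internalVertices.map c).Nodup ∧ ∀ w ∈ p.internalVertices, c w < k

instance {V : Type*} [DecidableEq V] {G : SimpleGraph V} {u v : V}
    (c : V → ℕ) (k : ℕ) (p : G.Walk u v) : Decidable (RVC.walkOK c k p) :=
  inferInstanceAs (Decidable (_ ∧ _ ∧ _))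

lemma RVC.main (m k : ℕ) (c : Fin (m+3) → ℕ) (hc : ∀ v, c v < k)
    (h : ∀ u v : Fin (m+3), u ≠ v →
      RVC.walkOK c k (RVC.fwd u v) ∨ RVC.walkOK c k (RVC.bwd u v)) :
    (∃ cF : Fin (m+3) → Fin k, (cycleGraph (m+3)).RainbowVertexConnected cF) ∧
    (cycleGraph (m+3)).rvc ≤ k := by
  have key : ∀ u v : Fin (m+3), u ≠ v → ∃ p : (cycleGraph (m+3)).Walk u v,
      p.IsRainbowPath c ∧ ∀ w ∈ p.internalVertices, c w < k := by
    intro u v huv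
    rcases h u v huv with h' | h'
    · exact ⟨RVC.fwd u v, ⟨Walk.IsPath.mk' h'.1, h'.2.1⟩, h'.2.2⟩
    · exact ⟨RVC.bwd u v, ⟨Walk.IsPath.mk' h'.1, h'.2.1⟩, h'.2.2⟩
  constructor
  · refine ⟨fun v => ⟨c v, hc v⟩, fun u v huv => ?_⟩
    obtain ⟨p, hp, -⟩ := key u v huv
    refine ⟨p, hp.1, ?_⟩
    have hmap : p.internalVertices.map c =
        (p.internalVertices.map (fun v => (⟨c v, hc v⟩ : Fin k))).map Fin.val := by
      simp [List.map_map]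
    exact (hmap ▸ hp.2).of_map
  · exact Nat.sInf_le ⟨c, key⟩

set_option maxHeartbeats 12000000 in
/-- for `n ∈ {6, 7, 8, 10, 11, 12, 13, 15}` there is a vertex coloring of
`Cₙ` with at most `⌈n/2⌉ - 1` colors making it rainbow vertex-connected; hence
`rvc (Cₙ) ≤ ⌈n/2⌉ - 1`.  (Here `⌈n/2⌉ = (n + 1) / 2` with natural division.) -/
theorem rvc_cycleGraph_le_ceil_half_sub_one (n : ℕ)
    (hn : n ∈ ({6, 7, 8, 10, 11, 12, 13, 15} : Set ℕ)) :
    (∃ c : Fin n → Fin ((n + 1) / 2 - 1),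
      (SimpleGraph.cycleGraph n).RainbowVertexConnected c) ∧
    (SimpleGraph.cycleGraph n).rvc ≤ (n + 1) / 2 - 1 := by
  simp only [Set.mem_insert_iff, Set.mem_singleton_iff] at hn
  rcases hn with rfl | rfl | rfl | rfl | rfl | rfl | rfl | rfl
  · exact RVC.main 3 2 ![0,1,0,0,0,1] (by decide) (by decide)
  · exact RVC.main 4 3 ![0,2,2,0,2,0,1] (by decide) (by decide)
  · exact RVC.main 5 3 ![0,2,1,2,1,0,2,1] (by decide) (by decide)
  · exact RVC.main 7 4 ![0,3,1,0,3,2,1,0,3,2] (by decide) (by decide)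
  · exact RVC.main 8 5 ![0,3,2,0,1,4,2,0,3,1,4] (by decide) (by decide)
  · exact RVC.main 9 5 ![0,4,1,2,3,4,1,0,2,4,1,3] (by decide) (by decide)
  · exact RVC.main 10 6 ![0,4,1,2,0,3,5,4,2,0,1,3,2] (by decide) (by decide)
  · exact RVC.main 12 7 ![5,3,6,1,2,4,3,0,5,6,2,3,1,4,0] (by decide) (by decide)
end

section
/- For every odd n ≥ 3, the cycle C_n admits a vertex coloring with ⌈n/2⌉ colors, in which every color appears at most twice, that makes C_n revised rainbow vertex-connected; hence rvc*(C_n) ≤ ⌈n/2⌉ for odd n. -/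
open SimpleGraph
open Fin.NatCast Fin.CommRing

/-- Walk along the cycle from `u` forward `k` steps. -/
def cycWalk {n : ℕ} [NeZero n] (hn : 2 ≤ n) :
    (k : ℕ) → (u : Fin n) → (cycleGraph n).Walk u (u + (k : Fin n))
  | 0, u => Walk.nil.copy rfl (by simp)
  | k+1, u => Walk.cons
      (by
        rw [cycleGraph_adj']
        right
        have h1 : u + 1 - u = 1 := by ring
        rw [h1, Fin.val_one', Nat.mod_eq_of_lt (by omega)])
      ((cycWalk hn k (u+1)).copy rfl (by push_cast; ring))

lemma cycWalk_support {n : ℕ} [NeZero n] (hn : 2 ≤ n) (k : ℕ) (u : Fin n) :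
    (cycWalk hn k u).support = List.map (fun t : ℕ => u + (t : Fin n)) (List.range (k+1)) := by
  induction k generalizing u with
  | zero => simp [cycWalk, List.range_succ]
  | succ k ih =>
    rw [cycWalk]
    rw [Walk.support_cons, Walk.support_copy, ih]
    rw [List.range_succ_eq_map (n := k+1), List.map_cons, List.map_map]
    congr 1
    · simp
    · apply List.map_congr_left
      intro t _
      simp only [Function.comp_apply]
      push_cast
      ring

lemma rev_rrp {V α : Type*} {G : SimpleGraph V} {u v : V} {c : V → α} (p : G.Walk u v)
    (h : p.IsRevisedRainbowPath c) : p.reverse.IsRevisedRainbowPath c := by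
  obtain ⟨hp, h1, h2⟩ := h
  refine ⟨hp.reverse, ?_, ?_⟩
  · have : p.reverse.support.dropLast = p.support.tail.reverse := by
      rw [Walk.support_reverse]
      have h := List.tail_reverse (l := p.support.reverse)
      rw [List.reverse_reverse] at h
      rw [h, List.reverse_reverse]
    rw [this, List.map_reverse, List.nodup_reverse]
    exact h2
  · rw [Walk.support_reverse, List.tail_reverse, List.map_reverse,
      List.nodup_reverse]
    exact h1

/-- key arithmetic fact -/
lemma key_arith (n m a t s : ℕ) (hnm : n = 2*m-1) (hm : 2 ≤ m) (ha : a < n) (hts : t < s)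
    (hs : s ≤ m - 1)
    (h : ((a + t) % n) % m = ((a + s) % n) % m) : t = 0 ∧ s = m - 1 := by
  by_cases h1 : a + s < n
  · have h2 : a + t < n := by omega
    rw [Nat.mod_eq_of_lt h1, Nat.mod_eq_of_lt h2] at h
    have : (a + t) ≡ (a + s) [MOD m] := h
    have : t ≡ s [MOD m] := Nat.ModEq.add_left_cancel' a this
    have hd : m ∣ s - t := (Nat.modEq_iff_dvd' (le_of_lt hts)).mp this
    have := Nat.le_of_dvd (by omega) hd
    omega
  · by_cases h2 : a + t < n
    · -- wrap at s only
      have e1 : (a + s) % n = a + s - n := by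
        rw [Nat.mod_eq_sub_mod (by omega), Nat.mod_eq_of_lt (by omega)]
      have e2 : (a + s - n) % m = a + s - n := Nat.mod_eq_of_lt (by omega)
      have e3 : (a + t) % n = a + t := Nat.mod_eq_of_lt h2
      have e4 : (a + t) % m = a + t - m := by
        rw [Nat.mod_eq_sub_mod (by omega), Nat.mod_eq_of_lt (by omega)]
      rw [e1, e2, e3, e4] at h
      omega
    · -- both wrap
      have e1 : (a + s) % n = a + s - n := by
        rw [Nat.mod_eq_sub_mod (by omega), Nat.mod_eq_of_lt (by omega)]
      have e2 : (a + t) % n = a + t - n := by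
        rw [Nat.mod_eq_sub_mod (by omega), Nat.mod_eq_of_lt (by omega)]
      rw [e1, e2, Nat.mod_eq_of_lt (by omega), Nat.mod_eq_of_lt (by omega)] at h
      omega


lemma copy_rrp {V α : Type*} {G : SimpleGraph V} {u v u' v' : V} {c : V → α} (p : G.Walk u v)
    (hu : u = u') (hv : v = v') (h : p.IsRevisedRainbowPath c) :
    (p.copy hu hv).IsRevisedRainbowPath c := by
  obtain ⟨hp, h1, h2⟩ := h
  exact ⟨(SimpleGraph.Walk.isPath_copy p hu hv).mpr hp,
    by rwa [SimpleGraph.Walk.support_copy], by rwa [SimpleGraph.Walk.support_copy]⟩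

/-- for odd `n ≥ 3`, the cycle `Cₙ` has a revised rainbow
vertex-coloring with `⌈n/2⌉` colors in which every color appears at most twice; hence
`rvc* (Cₙ) ≤ ⌈n/2⌉`.  (Here `⌈n/2⌉ = (n + 1) / 2` with natural division.) -/
theorem rvcStar_cycleGraph_le_of_odd (n : ℕ) (hn : 3 ≤ n) (hodd : Odd n) :
    (∃ c : Fin n → Fin ((n + 1) / 2),
      (∀ x : Fin ((n + 1) / 2), (Finset.univ.filter (fun v => c v = x)).card ≤ 2) ∧
      (SimpleGraph.cycleGraph n).RevisedRainbowVertexConnected c) ∧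
    (SimpleGraph.cycleGraph n).rvcStar ≤ (n + 1) / 2 := by
  haveI : NeZero n := ⟨by omega⟩
  obtain ⟨j, hj⟩ := hodd
  set m := (n + 1) / 2 with hm
  clear_value m
  have hnm : n = 2 * m - 1 := by omega
  have hm2 : 2 ≤ m := by omega
  set c : Fin n → Fin m := fun v => ⟨v.val % m, Nat.mod_lt _ (by omega)⟩ with hc
  have hcval : ∀ (u : Fin n) (t : ℕ), t < n →
      ((c (u + (t : Fin n))) : ℕ) = ((u.val + t) % n) % m := by
    intro u t ht
    show ((u + (t : Fin n)).val % m) = _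
    rw [Fin.add_def, Fin.val_natCast, Nat.mod_eq_of_lt ht]
  have hcinj : ∀ (u : Fin n) (t s : ℕ), t < s → s ≤ m - 1 →
      c (u + (t : Fin n)) = c (u + (s : Fin n)) → t = 0 ∧ s = m - 1 := by
    intro u t s hts hs heq
    have hu := u.isLt
    have heq' := congrArg Fin.val heq
    rw [hcval u t (by omega), hcval u s (by omega)] at heq'
    exact key_arith n m u.val t s hnm hm2 (by omega) hts hs heq'
  -- the forward walk of length k (1 ≤ k ≤ m-1) is a revised rainbow path
  have main : ∀ (u : Fin n) (k : ℕ), 1 ≤ k → k ≤ m - 1 →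
      ∃ p : (SimpleGraph.cycleGraph n).Walk u (u + (k : Fin n)),
        p.IsRevisedRainbowPath c := by
    intro u k hk1 hk2
    have hsup := cycWalk_support (n := n) (by omega) k u
    refine ⟨cycWalk (by omega) k u, ?_, ?_, ?_⟩
    · apply SimpleGraph.Walk.IsPath.mk'
      rw [hsup]
      refine List.Nodup.map_on ?_ List.nodup_range
      intro t ht s hs heq
      rw [List.mem_range] at ht hs
      have heq2 : (t : Fin n) = (s : Fin n) := by
        have := add_left_cancel heq
        exact this
      have heq3 := congrArg Fin.val heq2
      rw [Fin.val_natCast, Fin.val_natCast, Nat.mod_eq_of_lt (by omega),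
        Nat.mod_eq_of_lt (by omega)] at heq3
      exact heq3
    · -- dropLast
      rw [hsup, List.range_succ, List.map_append, List.map_singleton,
        List.dropLast_concat, List.map_map]
      refine List.Nodup.map_on ?_ List.nodup_range
      intro t ht s hs heq
      rw [List.mem_range] at ht hs
      simp only [Function.comp_apply] at heq
      rcases lt_trichotomy t s with h | h | h
      · have := hcinj u t s h (by omega) heq
        omega
      · exact h
      · have := hcinj u s t h (by omega) heq.symm
        omega
    · -- tail
      rw [hsup, List.range_succ_eq_map, List.map_cons, List.tail_cons, List.map_map,
        List.map_map]
      refine List.Nodup.map_on ?_ List.nodup_range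
      intro t ht s hs heq
      rw [List.mem_range] at ht hs
      simp only [Function.comp_apply, Nat.succ_eq_add_one] at heq
      rcases lt_trichotomy t s with h | h | h
      · have := hcinj u (t + 1) (s + 1) (by omega) (by omega) heq
        omega
      · exact h
      · have := hcinj u (s + 1) (t + 1) (by omega) (by omega) heq.symm
        omega
  have hconn : (SimpleGraph.cycleGraph n).RevisedRainbowVertexConnected c := by
    intro u v huv
    obtain ⟨k, hk⟩ : ∃ k, k = (v - u).val := ⟨_, rfl⟩
    have hk1 : 1 ≤ k := by
      have hne : v - u ≠ 0 := sub_ne_zero.mpr (Ne.symm huv)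
      have hne' : (v - u).val ≠ 0 := fun h0 => hne (Fin.ext (by simp [h0]))
      omega
    have hkn : k ≤ n - 1 := by
      have := (v - u).isLt
      omega
    have hveq : u + ((k : ℕ) : Fin n) = v := by
      rw [hk, Fin.cast_val_eq_self]
      ring
    by_cases hcase : k ≤ m - 1
    · obtain ⟨p, hp⟩ := main u k hk1 hcase
      exact ⟨p.copy rfl hveq, copy_rrp p rfl hveq hp⟩
    · obtain ⟨k', hk'⟩ : ∃ k', k' = n - k := ⟨_, rfl⟩
      have hk'1 : 1 ≤ k' := by omega
      have hk'2 : k' ≤ m - 1 := by omega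
      obtain ⟨p, hp⟩ := main v k' hk'1 hk'2
      have hend : v + ((k' : ℕ) : Fin n) = u := by
        have h1 : ((k' : ℕ) : Fin n) = -(v - u) := by
          rw [hk', Nat.cast_sub (by omega), Fin.natCast_self, hk, Fin.cast_val_eq_self]
          ring
        rw [h1]
        ring
      exact ⟨(p.copy rfl hend).reverse, rev_rrp _ (copy_rrp p rfl hend hp)⟩
  refine ⟨⟨c, ?_, hconn⟩, Nat.sInf_le ⟨c, hconn⟩⟩
  intro x
  have hsub : (Finset.univ.filter (fun v => c v = x)).card ≤
      ({x.val, x.val + m} : Finset ℕ).card := by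
    apply Finset.card_le_card_of_injOn Fin.val
    · intro v hv
      simp only [Finset.mem_coe, Finset.mem_filter] at hv
      have hvx : v.val % m = x.val := congrArg Fin.val hv.2
      have hv' := v.isLt
      simp only [Finset.mem_coe, Finset.mem_insert, Finset.mem_singleton]
      by_cases hlt : v.val < m
      · left
        rw [Nat.mod_eq_of_lt hlt] at hvx
        exact hvx
      · right
        rw [Nat.mod_eq_sub_mod (by omega), Nat.mod_eq_of_lt (by omega)] at hvx
        omega
    · intro a _ b _ h
      exact Fin.val_injective h
  refine hsub.trans ((Finset.card_insert_le _ _).trans (by simp))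
end
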